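/- Fix t ∈ (0,1] and a partition 0 = t_0 < t_1 < … < t_d = t. For every λ = (λ_1,…,λ_{d+1}) ∈ ℝ^{d+1} with max_{1≤i≤d} λ_i + λ_{d+1} < 1 and λ_{d+1} < 1, lim_{n→∞} (1/n) log E[ exp( ∑_{i=1}^d λ_i (Z_{⌊n t_i⌋} − Z_{⌊n t_{i−1}⌋}) + λ_{d+1} Z_{n+1} ) ] = −∑_{i=1}^d (t_i − t_{i−1}) log(1 − λ_i − λ_{d+1}) − (1 − t) log(1 − λ_{d+1}). -/

import Mathlib

open MeasureTheory ProbabilityTheory Filter Set Real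
open scoped ENNReal NNReal Classical

lemma exp_integral_expMeasure {c : ℝ} (hc : c < 1) :
    ∫ x, Real.exp (c * x) ∂(ProbabilityTheory.expMeasure 1) = (1 - c)⁻¹ := by
  have h1c : (0:ℝ) < 1 - c := by linarith
  have hm : Measurable (exponentialPDF 1) :=
    Measurable.ennreal_ofReal (measurable_exponentialPDFReal 1)
  have hmeq : ProbabilityTheory.expMeasure 1
      = volume.withDensity (exponentialPDF 1) := rfl
  rw [integral_eq_lintegral_of_nonneg_ae (ae_of_all _ fun x => (Real.exp_pos _).le)
    (Measurable.aestronglyMeasurable (by fun_prop))]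
  have key : ∫⁻ x, ENNReal.ofReal (Real.exp (c * x)) ∂(ProbabilityTheory.expMeasure 1)
      = ENNReal.ofReal ((1 - c)⁻¹) := by
    rw [hmeq, lintegral_withDensity_eq_lintegral_mul _ hm (by fun_prop)]
    have hpt : ∀ x, (exponentialPDF 1 * fun x => ENNReal.ofReal (Real.exp (c * x))) x
        = ENNReal.ofReal ((1 - c)⁻¹) * exponentialPDF (1 - c) x := by
      intro x
      simp only [Pi.mul_apply]
      rcases le_or_gt 0 x with hx | hx
      · rw [exponentialPDF_of_nonneg hx, exponentialPDF_of_nonneg hx,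
          ← ENNReal.ofReal_mul (by positivity), ← ENNReal.ofReal_mul (by positivity)]
        congr 1
        rw [inv_mul_cancel_left₀ h1c.ne', one_mul, ← Real.exp_add]
        congr 1
        ring
      · rw [exponentialPDF_of_neg hx, exponentialPDF_of_neg hx, zero_mul, mul_zero]
    simp_rw [hpt]
    rw [lintegral_const_mul _
        (show Measurable (exponentialPDF (1 - c)) from
          Measurable.ennreal_ofReal (measurable_exponentialPDFReal _)),
      lintegral_exponentialPDF_eq_one h1c, mul_one]
  rw [key, ENNReal.toReal_ofReal (by positivity)]

lemma exp_mul_integral {Ω : Type*} [MeasurableSpace Ω] (P : Measure Ω) (X : Ω → ℝ)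
    (hX : Measurable X) (hmap : Measure.map X P = ProbabilityTheory.expMeasure 1)
    {c : ℝ} (hc : c < 1) :
    ∫ ω, Real.exp (c * X ω) ∂P = (1 - c)⁻¹ := by
  have hg : AEStronglyMeasurable (fun x => Real.exp (c * x)) (Measure.map X P) :=
    Measurable.aestronglyMeasurable (by fun_prop)
  have h := MeasureTheory.integral_map hX.aemeasurable hg
  rw [← h, hmap]
  exact exp_integral_expMeasure hc

lemma floor_div_tendsto {r : ℝ} (hr : 0 ≤ r) :
    Tendsto (fun n : ℕ => (n:ℝ)⁻¹ * (⌊(n:ℝ) * r⌋₊ : ℝ)) atTop (nhds r) := by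
  have h := (tendsto_nat_floor_mul_div_atTop hr).comp
    (tendsto_natCast_atTop_atTop (R := ℝ))
  simpa [Function.comp_def, mul_comm, div_eq_inv_mul] using h

theorem erlang_increments_cumulant_limit
    {Ω : Type*} [MeasurableSpace Ω] (P : Measure Ω) [IsProbabilityMeasure P]
    (E : ℕ → Ω → ℝ)
    (hEmeas : ∀ i, Measurable (E i))
    (hEindep : iIndepFun E P)
    (hEexp : ∀ i, Measure.map (E i) P = expMeasure 1)
    (t : ℝ) (ht : t ∈ Set.Ioc (0 : ℝ) 1)
    (d : ℕ) (hd : 1 ≤ d)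
    (τ : ℕ → ℝ) (hτ0 : τ 0 = 0) (hτd : τ d = t)
    (hτmono : ∀ i < d, τ i < τ (i + 1))
    (lam : ℕ → ℝ)
    (hlam : ∀ i ∈ Finset.Icc 1 d, lam i + lam (d + 1) < 1)
    (hlamd : lam (d + 1) < 1) :
    Filter.Tendsto
      (fun n : ℕ =>
        (n : ℝ)⁻¹ *
          Real.log
            (∫ ω,
              Real.exp
                ((∑ i ∈ Finset.Icc 1 d,
                    lam i *
                      ((∑ k ∈ Finset.range ⌊(n : ℝ) * τ i⌋₊, E k ω) -
                        ∑ k ∈ Finset.range ⌊(n : ℝ) * τ (i - 1)⌋₊, E k ω)) +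
                  lam (d + 1) * ∑ k ∈ Finset.range (n + 1), E k ω) ∂P))
      Filter.atTop
      (nhds
        (-(∑ i ∈ Finset.Icc 1 d,
              (τ i - τ (i - 1)) * Real.log (1 - lam i - lam (d + 1))) -
          (1 - t) * Real.log (1 - lam (d + 1)))) := by
  obtain ⟨ht0, ht1⟩ := ht
  -- monotonicity of τ
  have hτle : ∀ j, j ≤ d → ∀ i, i ≤ j → τ i ≤ τ j := by
    intro j
    induction j with
    | zero => intro _ i hi; obtain rfl := Nat.le_zero.mp hi; exact le_rfl
    | succ m ih =>
      intro hm i hi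
      have hstep : τ m < τ (m + 1) := hτmono m (Nat.lt_of_succ_le hm)
      rcases Nat.eq_or_lt_of_le hi with rfl | h
      · exact le_rfl
      · exact (ih (Nat.le_of_succ_le hm) i (Nat.lt_succ_iff.mp h)).trans hstep.le
  have hτnonneg : ∀ i, i ≤ d → 0 ≤ τ i := fun i hi => by
    have := hτle i hi 0 (Nat.zero_le i); rwa [hτ0] at this
  set A : ℝ := Real.log (1 - lam (d + 1)) with hA
  set B : ℕ → ℝ := fun i => Real.log (1 - lam i - lam (d + 1)) - A with hB
  -- the exact value for every n
  have main : ∀ n : ℕ,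
      Real.log
        (∫ ω,
          Real.exp
            ((∑ i ∈ Finset.Icc 1 d,
                lam i *
                  ((∑ k ∈ Finset.range ⌊(n : ℝ) * τ i⌋₊, E k ω) -
                    ∑ k ∈ Finset.range ⌊(n : ℝ) * τ (i - 1)⌋₊, E k ω)) +
              lam (d + 1) * ∑ k ∈ Finset.range (n + 1), E k ω) ∂P)
      = -(((n : ℝ) + 1) * A +
          ∑ i ∈ Finset.Icc 1 d,
            ((⌊(n : ℝ) * τ i⌋₊ : ℝ) - (⌊(n : ℝ) * τ (i - 1)⌋₊ : ℝ)) * B i) := by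
    intro n
    set a : ℕ → ℕ := fun i => ⌊(n : ℝ) * τ i⌋₊ with ha
    have amono : ∀ p q, p ≤ q → q ≤ d → a p ≤ a q := fun p q hpq hq =>
      Nat.floor_le_floor (mul_le_mul_of_nonneg_left (hτle q hq p hpq) (Nat.cast_nonneg n))
    have hasub : ∀ i ∈ Finset.Icc 1 d, a (i - 1) ≤ a i := fun i hi =>
      amono (i - 1) i (Nat.sub_le i 1) (Finset.mem_Icc.mp hi).2
    have haub : ∀ i, i ≤ d → a i ≤ n := by
      intro i hi
      have h1 : (n : ℝ) * τ i ≤ (n : ℝ) * 1 := by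
        apply mul_le_mul_of_nonneg_left _ (Nat.cast_nonneg n)
        exact ((hτle d le_rfl i hi).trans_eq hτd).trans ht1
      calc a i ≤ ⌊(n : ℝ) * 1⌋₊ := Nat.floor_le_floor h1
        _ = n := by rw [mul_one, Nat.floor_natCast]
    have hblocksub : ∀ i ∈ Finset.Icc 1 d,
        Finset.Ico (a (i - 1)) (a i) ⊆ Finset.range (n + 1) := by
      intro i hi k hk
      rw [Finset.mem_range]
      have h1 := (Finset.mem_Ico.mp hk).2
      have h2 : a i ≤ n := haub i (Finset.mem_Icc.mp hi).2
      omega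
    set c : ℕ → ℝ := fun k => lam (d + 1) +
      ∑ i ∈ Finset.Icc 1 d, if k ∈ Finset.Ico (a (i - 1)) (a i) then lam i else 0 with hc
    -- at most one block contains k
    have hdisj : ∀ k, ∀ i ∈ Finset.Icc 1 d, ∀ j ∈ Finset.Icc 1 d, i ≠ j →
        k ∈ Finset.Ico (a (i - 1)) (a i) → k ∉ Finset.Ico (a (j - 1)) (a j) := by
      intro k i hi j hj hij hki hkj
      obtain ⟨hi1, hi2⟩ := Finset.mem_Icc.mp hi
      obtain ⟨hj1, hj2⟩ := Finset.mem_Icc.mp hj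
      obtain ⟨hki1, hki2⟩ := Finset.mem_Ico.mp hki
      obtain ⟨hkj1, hkj2⟩ := Finset.mem_Ico.mp hkj
      rcases lt_or_gt_of_ne hij with h | h
      · have : a i ≤ a (j - 1) := amono i (j - 1) (by omega) (by omega)
        omega
      · have : a j ≤ a (i - 1) := amono j (i - 1) (by omega) (by omega)
        omega
    have hkey : ∀ k,
        ((∀ i ∈ Finset.Icc 1 d, k ∉ Finset.Ico (a (i - 1)) (a i)) ∧ c k = lam (d + 1)) ∨
        (∃ i ∈ Finset.Icc 1 d, k ∈ Finset.Ico (a (i - 1)) (a i) ∧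
          c k = lam i + lam (d + 1) ∧
          (∀ j ∈ Finset.Icc 1 d, j ≠ i → k ∉ Finset.Ico (a (j - 1)) (a j))) := by
      intro k
      by_cases h : ∃ i ∈ Finset.Icc 1 d, k ∈ Finset.Ico (a (i - 1)) (a i)
      · obtain ⟨i, hi, hk⟩ := h
        right
        refine ⟨i, hi, hk, ?_, fun j hj hji hkj => hdisj k j hj i hi hji hkj hk⟩
        simp only [hc]
        rw [Finset.sum_eq_single i
          (fun j hj hji => if_neg (hdisj k i hi j hj (Ne.symm hji) hk))
          (fun hni => absurd hi hni), if_pos hk]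
        ring
      · push_neg at h
        left
        refine ⟨h, ?_⟩
        simp only [hc]
        rw [Finset.sum_eq_zero (fun i hi => if_neg (h i hi)), add_zero]
    have hclt : ∀ k, c k < 1 := by
      intro k
      rcases hkey k with ⟨_, h⟩ | ⟨i, hi, _, h, _⟩
      · rw [h]; exact hlamd
      · rw [h]; exact hlam i hi
    -- rewrite the exponent
    have hexpr : ∀ ω : Ω,
        (∑ i ∈ Finset.Icc 1 d,
            lam i * ((∑ k ∈ Finset.range (a i), E k ω) -
              ∑ k ∈ Finset.range (a (i - 1)), E k ω)) +
          lam (d + 1) * ∑ k ∈ Finset.range (n + 1), E k ω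
        = ∑ k ∈ Finset.range (n + 1), c k * E k ω := by
      intro ω
      have h1 : ∀ i ∈ Finset.Icc 1 d,
          lam i * ((∑ k ∈ Finset.range (a i), E k ω) -
            ∑ k ∈ Finset.range (a (i - 1)), E k ω)
          = ∑ k ∈ Finset.range (n + 1),
              (if k ∈ Finset.Ico (a (i - 1)) (a i) then lam i else 0) * E k ω := by
        intro i hi
        rw [← Finset.sum_Ico_eq_sub _ (hasub i hi), Finset.mul_sum]
        simp only [ite_mul, zero_mul]
        rw [Finset.sum_ite_mem, Finset.inter_eq_right.mpr (hblocksub i hi)]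
      rw [Finset.sum_congr rfl h1]
      simp only [hc, add_mul, Finset.sum_add_distrib, Finset.mul_sum, Finset.sum_mul]
      rw [Finset.sum_comm]
      ring
    -- compute the integral
    have hXmeas : ∀ k, Measurable (fun ω => c k * E k ω) := fun k =>
      (hEmeas k).const_mul _
    have hXindep : iIndepFun (fun k ω => c k * E k ω) P :=
      hEindep.comp (fun k x => c k * x) (fun k => measurable_id.const_mul (c k))
    have hint :
        ∫ ω, Real.exp
            ((∑ i ∈ Finset.Icc 1 d,
                lam i * ((∑ k ∈ Finset.range (a i), E k ω) -
                  ∑ k ∈ Finset.range (a (i - 1)), E k ω)) +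
              lam (d + 1) * ∑ k ∈ Finset.range (n + 1), E k ω) ∂P
        = ∏ k ∈ Finset.range (n + 1), (1 - c k)⁻¹ := by
      have step1 : ∫ ω, Real.exp
            ((∑ i ∈ Finset.Icc 1 d,
                lam i * ((∑ k ∈ Finset.range (a i), E k ω) -
                  ∑ k ∈ Finset.range (a (i - 1)), E k ω)) +
              lam (d + 1) * ∑ k ∈ Finset.range (n + 1), E k ω) ∂P
          = mgf (∑ k ∈ Finset.range (n + 1), fun ω => c k * E k ω) P 1 := by
        rw [mgf]
        refine integral_congr_ae (ae_of_all _ fun ω => ?_)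
        simp only [Finset.sum_apply, one_mul]
        exact congrArg Real.exp (hexpr ω)
      rw [step1, hXindep.mgf_sum hXmeas]
      refine Finset.prod_congr rfl fun k _ => ?_
      have : mgf (fun ω => c k * E k ω) P 1 = ∫ ω, Real.exp (c k * E k ω) ∂P := by
        rw [mgf]
        simp only [one_mul]
      rw [this]
      exact exp_mul_integral P (E k) (hEmeas k) (hEexp k) (hclt k)
    rw [hint]
    -- take logs
    have hpos : ∀ k, (0:ℝ) < 1 - c k := fun k => by linarith [hclt k]
    rw [Real.log_prod (fun k _ => inv_ne_zero (hpos k).ne')]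
    simp_rw [Real.log_inv]
    rw [Finset.sum_neg_distrib]
    congr 1
    -- compute the sum of logs
    have hk : ∀ k, Real.log (1 - c k) = A +
        ∑ i ∈ Finset.Icc 1 d,
          if k ∈ Finset.Ico (a (i - 1)) (a i) then B i else 0 := by
      intro k
      rcases hkey k with ⟨hnone, hval⟩ | ⟨i, hi, hk', hval, huniq⟩
      · rw [hval, Finset.sum_eq_zero (fun i hi => if_neg (hnone i hi)), add_zero, hA]
      · rw [hval, Finset.sum_eq_single i
          (fun j hj hji => if_neg (huniq j hj hji)) (fun hni => absurd hi hni),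
          if_pos hk', hB]
        have : 1 - (lam i + lam (d + 1)) = 1 - lam i - lam (d + 1) := by ring
        rw [this, hA]
        ring
    simp_rw [hk]
    rw [Finset.sum_add_distrib, Finset.sum_const, Finset.card_range, Finset.sum_comm]
    congr 1
    · rw [nsmul_eq_mul]; push_cast; ring
    · refine Finset.sum_congr rfl fun i hi => ?_
      rw [Finset.sum_ite_mem, Finset.inter_eq_right.mpr (hblocksub i hi),
        Finset.sum_const, Nat.card_Ico, nsmul_eq_mul, Nat.cast_sub (hasub i hi)]
  -- pass to the limit
  have htel : ∑ i ∈ Finset.Icc 1 d, (τ i - τ (i - 1)) = t := by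
    have h1 : ∑ i ∈ Finset.Icc 1 d, (τ i - τ (i - 1))
        = ∑ j ∈ Finset.range d, (τ (j + 1) - τ j) := by
      rw [← Finset.Ico_add_one_right_eq_Icc, Finset.sum_Ico_eq_sum_range]
      refine Finset.sum_congr rfl fun j _ => ?_
      rw [show 1 + j - 1 = j from by omega, show 1 + j = j + 1 from by omega]
    rw [h1, Finset.sum_range_sub τ, hτd, hτ0, sub_zero]
  have htarget :
      (-(∑ i ∈ Finset.Icc 1 d,
            (τ i - τ (i - 1)) * Real.log (1 - lam i - lam (d + 1))) -
          (1 - t) * A)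
      = -(1 * A + ∑ i ∈ Finset.Icc 1 d, (τ i - τ (i - 1)) * B i) := by
    simp only [hB, mul_sub]
    rw [Finset.sum_sub_distrib, ← Finset.sum_mul, htel]
    ring
  -- tendsto of each piece
  have hu : Tendsto (fun n : ℕ => (n : ℝ)⁻¹ * ((n : ℝ) + 1)) atTop (nhds 1) := by
    have h0 : Tendsto (fun n : ℕ => 1 + (n : ℝ)⁻¹) atTop (nhds (1 + 0)) :=
      tendsto_const_nhds.add (tendsto_inv_atTop_zero.comp (tendsto_natCast_atTop_atTop (R := ℝ)))
    rw [add_zero] at h0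
    refine h0.congr' ?_
    filter_upwards [eventually_gt_atTop 0] with n hn
    have : (n : ℝ) ≠ 0 := Nat.cast_ne_zero.mpr hn.ne'
    field_simp
  have hw : ∀ i ∈ Finset.Icc 1 d,
      Tendsto (fun n : ℕ => (n : ℝ)⁻¹ *
        ((⌊(n : ℝ) * τ i⌋₊ : ℝ) - (⌊(n : ℝ) * τ (i - 1)⌋₊ : ℝ))) atTop
        (nhds (τ i - τ (i - 1))) := by
    intro i hi
    obtain ⟨hi1, hi2⟩ := Finset.mem_Icc.mp hi
    have h1 := floor_div_tendsto (hτnonneg i hi2)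
    have h2 := floor_div_tendsto (hτnonneg (i - 1) (by omega))
    have := h1.sub h2
    refine this.congr fun n => by ring
  have hfinal : Tendsto
      (fun n : ℕ => (n : ℝ)⁻¹ *
        (-(((n : ℝ) + 1) * A +
          ∑ i ∈ Finset.Icc 1 d,
            ((⌊(n : ℝ) * τ i⌋₊ : ℝ) - (⌊(n : ℝ) * τ (i - 1)⌋₊ : ℝ)) * B i)))
      atTop (nhds (-(1 * A + ∑ i ∈ Finset.Icc 1 d, (τ i - τ (i - 1)) * B i))) := by
    have h := ((hu.mul_const A).add
      (tendsto_finset_sum (Finset.Icc 1 d) fun i hi => (hw i hi).mul_const (B i))).neg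
    refine h.congr fun n => ?_
    simp only [mul_neg, mul_add, add_mul, Finset.mul_sum, mul_assoc, one_mul, mul_one]
  rw [htarget]
  exact hfinal.congr fun n => (congrArg (fun z => (n : ℝ)⁻¹ * z) (main n)).symm
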